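/- (Recursive lower bound in the small-step regime.) Under the TAID regression recursion, let γ ∈ (0, 1], suppose κ > 1 and r_0 > 1, define β_0 := ((r_0 − 1)² + κ(2r_0 − 1))/(r_0 − 1 + κ)², β_1 := r_0²κ/(r_0 − 1 + κ)², β̄_0 := (1 − γ/r_0)·β_0 and β̄_1 := (1 − γ/r_0)·β_1, and let 1 ≤ t ≤ T be an integer. Suppose that for every 1 ≤ τ ≤ t one has τ/T ≤ γ/r_0, r_{τ−1} > 1, and λ_{τ−1} = α_{τ−1}·√(Nε)/(‖z̃_{τ−1}‖ − √(Nε)) for some α_{τ−1} ∈ [d_min, d_max], and suppose 0 < β̄_0 < 1. Then r_t ≥ β̄_0ᵗ·r_0 − (β̄_1 + γ)·(1 − β̄_0ᵗ)/(1 − β̄_0). -/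

import Mathlib

lemma taid_tangent {κ r0 x : ℝ} (hκ : 1 < κ) (hr0 : 1 < r0) (hx : 1 < x) :
    ((r0 - 1) ^ 2 + κ * (2 * r0 - 1)) / (r0 - 1 + κ) ^ 2 * x - r0 ^ 2 * κ / (r0 - 1 + κ) ^ 2
      ≤ (x - 1) * x / (x - 1 + κ) := by
  have h1 : (0:ℝ) < r0 - 1 + κ := by linarith
  have h2 : (0:ℝ) < x - 1 + κ := by linarith
  have key : (x - 1) * x / (x - 1 + κ) -
      (((r0 - 1) ^ 2 + κ * (2 * r0 - 1)) / (r0 - 1 + κ) ^ 2 * x - r0 ^ 2 * κ / (r0 - 1 + κ) ^ 2)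
      = κ * (κ - 1) * (x - r0) ^ 2 / ((x - 1 + κ) * (r0 - 1 + κ) ^ 2) := by
    field_simp
    ring
  have hnn : (0:ℝ) ≤ κ * (κ - 1) * (x - r0) ^ 2 :=
    mul_nonneg (mul_nonneg (by linarith) (by linarith)) (sq_nonneg _)
  nlinarith [div_nonneg hnn (by positivity : (0:ℝ) ≤ (x - 1 + κ) * (r0 - 1 + κ) ^ 2), key]

lemma taid_norm_mul {N : ℕ} (v w : EuclideanSpace ℝ (Fin N)) (f : Fin N → ℝ) (c : ℝ)
    (hc : 0 ≤ c) (hf : ∀ k, c ≤ f k) (hw : ∀ k, w k = f k * v k) :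
    c * ‖v‖ ≤ ‖w‖ := by
  rw [EuclideanSpace.norm_eq, EuclideanSpace.norm_eq]
  simp only [hw]
  rw [← Real.sqrt_sq hc, ← Real.sqrt_mul (by positivity)]
  apply Real.sqrt_le_sqrt
  rw [Finset.mul_sum]
  apply Finset.sum_le_sum
  intro k _
  simp only [Real.norm_eq_abs, sq_abs]
  nlinarith [hf k, sq_nonneg (v k), sq_nonneg (f k - c),
    mul_nonneg (mul_nonneg hc (sub_nonneg.2 (hf k))) (sq_nonneg (v k))]

set_option maxHeartbeats 1000000 in
theorem taid_recursive_lower_bound_small_steps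
    (N T : ℕ) (hN : 1 ≤ N) (hT : 1 ≤ T) (ε : ℝ) (hε : 0 < ε)
    (d : Fin N → ℝ) (hd : ∀ k, 0 < d k) (dmin dmax : ℝ)
    (hdminEq : dmin = ⨅ k, d k) (hdmaxEq : dmax = ⨆ k, d k)
    (κ : ℝ) (hκeq : κ = dmax / dmin) (hκ : 1 < κ)
    (lam : ℕ → ℝ)
    (z0 : EuclideanSpace ℝ (Fin N))
    (z ztilde : ℕ → EuclideanSpace ℝ (Fin N))
    (hz0 : ztilde 0 = z0)
    (hz : ∀ τ : ℕ, z (τ + 1) =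
      ((Matrix.diagonal d) *
        (lam τ • (1 : Matrix (Fin N) (Fin N) ℝ) + Matrix.diagonal d)⁻¹).mulVec (ztilde τ))
    (hzt : ∀ τ : ℕ, ztilde (τ + 1) =
      (1 - ((τ + 1 : ℕ) : ℝ) / (T : ℝ)) • z (τ + 1) + (((τ + 1 : ℕ) : ℝ) / (T : ℝ)) • z0)
    (r : ℕ → ℝ) (hr : ∀ τ, r τ = ‖ztilde τ‖ / Real.sqrt ((N : ℝ) * ε))
    (γ : ℝ) (hγ : γ ∈ Set.Ioc (0 : ℝ) 1)
    (hr0 : 1 < r 0)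
    (β₀ β₁ βb₀ βb₁ : ℝ)
    (hβ₀ : β₀ = ((r 0 - 1) ^ 2 + κ * (2 * r 0 - 1)) / (r 0 - 1 + κ) ^ 2)
    (hβ₁ : β₁ = (r 0) ^ 2 * κ / (r 0 - 1 + κ) ^ 2)
    (hβb₀ : βb₀ = (1 - γ / r 0) * β₀)
    (hβb₁ : βb₁ = (1 - γ / r 0) * β₁)
    (t : ℕ) (ht1 : 1 ≤ t) (htT : t ≤ T)
    (hsteps : ∀ τ : ℕ, 1 ≤ τ → τ ≤ t →
      ((τ : ℝ) / (T : ℝ) ≤ γ / r 0) ∧ (1 < r (τ - 1)) ∧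
      ∃ α ∈ Set.Icc dmin dmax,
        lam (τ - 1) =
          α * Real.sqrt ((N : ℝ) * ε) / (‖ztilde (τ - 1)‖ - Real.sqrt ((N : ℝ) * ε)))
    (hβb₀pos : 0 < βb₀) (hβb₀lt : βb₀ < 1) :
    βb₀ ^ t * r 0 - (βb₁ + γ) * (1 - βb₀ ^ t) / (1 - βb₀) ≤ r t := by
  have hNe : Nonempty (Fin N) := Fin.pos_iff_nonempty.mp hN
  set s : ℝ := Real.sqrt ((N : ℝ) * ε) with hs_def
  have hs : 0 < s := Real.sqrt_pos.mpr (by positivity)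
  have hdmin_le : ∀ k, dmin ≤ d k := fun k => by
    rw [hdminEq]; exact ciInf_le (Set.Finite.bddBelow (Set.finite_range d)) k
  have hdmin_pos : 0 < dmin := by
    obtain ⟨k0, hk0⟩ := exists_eq_ciInf_of_finite (f := d)
    rw [hdminEq, ← hk0]; exact hd k0
  have hle_dmax : ∀ k, d k ≤ dmax := fun k => by
    rw [hdmaxEq]; exact le_ciSup (Set.Finite.bddAbove (Set.finite_range d)) k
  have hdmax_eq : dmax = κ * dmin := by
    rw [hκeq]; field_simp
  have hnormz : ∀ τ, ‖ztilde τ‖ = r τ * s := fun τ => by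
    rw [hr τ]; field_simp
  have hγpos : 0 < γ := hγ.1
  have hγle : γ ≤ 1 := hγ.2
  have hr0pos : (0:ℝ) < r 0 := by linarith
  have hfac : 0 ≤ 1 - γ / r 0 := by
    rw [sub_nonneg, div_le_one hr0pos]; linarith
  -- one-step inequality
  have step : ∀ τ : ℕ, τ + 1 ≤ t → βb₀ * r τ - (βb₁ + γ) ≤ r (τ + 1) := by
    intro τ hτ
    obtain ⟨hfrac, hrτ, α, ⟨hα1, hα2⟩, hlam⟩ := hsteps (τ + 1) (by omega) hτ
    simp only [Nat.add_sub_cancel] at hrτ hlam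
    have hrτ1 : (0:ℝ) < r τ - 1 := by linarith
    have hα0 : 0 < α := lt_of_lt_of_le hdmin_pos hα1
    have hlamval : lam τ = α / (r τ - 1) := by
      rw [hlam, hnormz τ, show r τ * s - s = (r τ - 1) * s by ring,
        mul_div_mul_right _ _ (ne_of_gt hs)]
    have hlampos : 0 < lam τ := by rw [hlamval]; exact div_pos hα0 hrτ1
    -- matrix simplification
    have hmat : (Matrix.diagonal d) *
        (lam τ • (1 : Matrix (Fin N) (Fin N) ℝ) + Matrix.diagonal d)⁻¹
        = Matrix.diagonal (fun k => d k * (lam τ + d k)⁻¹) := by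
      have h1 : lam τ • (1 : Matrix (Fin N) (Fin N) ℝ) + Matrix.diagonal d
          = Matrix.diagonal (fun k => lam τ + d k) := by
        rw [Matrix.smul_one_eq_diagonal, ← Matrix.diagonal_add]
      have h2 : (Matrix.diagonal (fun k => lam τ + d k))⁻¹
          = Matrix.diagonal (fun k => (lam τ + d k)⁻¹) := by
        apply Matrix.inv_eq_right_inv
        rw [Matrix.diagonal_mul_diagonal]
        convert Matrix.diagonal_one using 2
        funext k
        exact mul_inv_cancel₀ (ne_of_gt (add_pos hlampos (hd k)))
      rw [h1, h2, Matrix.diagonal_mul_diagonal]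
    have hzval : ∀ k, z (τ + 1) k = (d k * (lam τ + d k)⁻¹) * ztilde τ k := by
      intro k
      rw [hz τ, hmat]
      exact Matrix.mulVec_diagonal _ _ k
    set c : ℝ := (r τ - 1) / (r τ - 1 + κ) with hc_def
    have hκ1 : (0:ℝ) < r τ - 1 + κ := by linarith
    have hcnn : 0 ≤ c := le_of_lt (div_pos hrτ1 hκ1)
    have hentry : ∀ k, c ≤ d k * (lam τ + d k)⁻¹ := by
      intro k
      have hdk := hd k
      rw [hlamval]
      have h1 : α / (r τ - 1) + d k = (α + d k * (r τ - 1)) / (r τ - 1) := by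
        field_simp
      have h2 : (0:ℝ) < α + d k * (r τ - 1) := by positivity
      have h3 : d k * ((α + d k * (r τ - 1)) / (r τ - 1))⁻¹
          = d k * (r τ - 1) / (α + d k * (r τ - 1)) := by
        rw [inv_div]; ring
      rw [h1, h3, hc_def, div_le_div_iff₀ hκ1 h2]
      have h4 : α ≤ d k * κ := by
        calc α ≤ dmax := hα2
          _ = κ * dmin := hdmax_eq
          _ ≤ κ * d k := mul_le_mul_of_nonneg_left (hdmin_le k) (by linarith)
          _ = d k * κ := mul_comm _ _
      nlinarith [mul_nonneg hrτ1.le (sub_nonneg.2 h4)]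
    have hznorm : c * ‖ztilde τ‖ ≤ ‖z (τ + 1)‖ :=
      taid_norm_mul (ztilde τ) (z (τ + 1)) _ c hcnn hentry hzval
    have hz0norm : ‖z0‖ = r 0 * s := by rw [← hz0, hnormz 0]
    set u : ℝ := ((τ + 1 : ℕ) : ℝ) / (T : ℝ) with hu
    have hu0 : 0 ≤ u := by positivity
    have hu1 : u ≤ γ / r 0 := hfrac
    have huT : u ≤ 1 := by
      rw [hu, div_le_one (by exact_mod_cast Nat.pos_of_ne_zero (by omega))]
      exact_mod_cast le_trans hτ htT
    have htri : (1 - u) * ‖z (τ + 1)‖ - u * ‖z0‖ ≤ ‖ztilde (τ + 1)‖ := by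
      rw [hzt τ]
      have h2 : (1 - u) • z (τ + 1) + u • z0 - u • z0 = (1 - u) • z (τ + 1) := by
        abel
      have h3 := norm_sub_le ((1 - u) • z (τ + 1) + u • z0) (u • z0)
      rw [h2, norm_smul, norm_smul, Real.norm_eq_abs, Real.norm_eq_abs,
        abs_of_nonneg (by linarith : (0:ℝ) ≤ 1 - u), abs_of_nonneg hu0] at h3
      linarith
    have hzn2 : c * (r τ * s) ≤ ‖z (τ + 1)‖ := by rw [← hnormz τ]; exact hznorm
    have key : ((1 - u) * (c * r τ) - u * r 0) * s ≤ r (τ + 1) * s := by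
      rw [← hnormz (τ + 1)]
      have h5 := mul_le_mul_of_nonneg_left hzn2 (by linarith : (0:ℝ) ≤ 1 - u)
      calc ((1 - u) * (c * r τ) - u * r 0) * s
          = (1 - u) * (c * (r τ * s)) - u * (r 0 * s) := by ring
        _ ≤ (1 - u) * ‖z (τ + 1)‖ - u * ‖z0‖ := by rw [hz0norm]; linarith
        _ ≤ ‖ztilde (τ + 1)‖ := htri
    have hkey2 : (1 - u) * (c * r τ) - u * r 0 ≤ r (τ + 1) :=
      (mul_le_mul_iff_of_pos_right hs).mp key
    have hcu : c * r τ = (r τ - 1) * r τ / (r τ - 1 + κ) := by rw [hc_def]; ring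
    have htang := taid_tangent hκ hr0 hrτ
    have hcrnn : 0 ≤ c * r τ := mul_nonneg hcnn (by linarith)
    have h5 : (1 - γ / r 0) * (c * r τ) ≤ (1 - u) * (c * r τ) :=
      mul_le_mul_of_nonneg_right (by linarith) hcrnn
    have h6 : βb₀ * r τ - βb₁ ≤ (1 - γ / r 0) * (c * r τ) := by
      calc βb₀ * r τ - βb₁ = (1 - γ / r 0) * (β₀ * r τ - β₁) := by
            rw [hβb₀, hβb₁]; ring
        _ ≤ (1 - γ / r 0) * (c * r τ) := by
            apply mul_le_mul_of_nonneg_left _ hfac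
            rw [hcu, hβ₀, hβ₁]
            calc ((r 0 - 1) ^ 2 + κ * (2 * r 0 - 1)) / (r 0 - 1 + κ) ^ 2 * r τ -
                r 0 ^ 2 * κ / (r 0 - 1 + κ) ^ 2 ≤ (r τ - 1) * r τ / (r τ - 1 + κ) := htang
              _ = (r τ - 1) * r τ / (r τ - 1 + κ) := rfl
    have h7 : u * r 0 ≤ γ := by
      have h8 := mul_le_mul_of_nonneg_right hu1 (le_of_lt hr0pos)
      rwa [div_mul_cancel₀ _ (ne_of_gt hr0pos)] at h8
    linarith
  -- induction
  have main : ∀ m : ℕ, m ≤ t → βb₀ ^ m * r 0 - (βb₁ + γ) * (1 - βb₀ ^ m) / (1 - βb₀) ≤ r m := by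
    intro m
    induction m with
    | zero => intro _; simp
    | succ n ih =>
      intro hm
      have ihn := ih (by omega)
      have hstep := step n (by omega)
      have h1 : βb₀ * (βb₀ ^ n * r 0 - (βb₁ + γ) * (1 - βb₀ ^ n) / (1 - βb₀)) ≤ βb₀ * r n :=
        mul_le_mul_of_nonneg_left ihn (le_of_lt hβb₀pos)
      have h1m : (1:ℝ) - βb₀ ≠ 0 := ne_of_gt (by linarith)
      have halg : βb₀ ^ (n + 1) * r 0 - (βb₁ + γ) * (1 - βb₀ ^ (n + 1)) / (1 - βb₀)
          = βb₀ * (βb₀ ^ n * r 0 - (βb₁ + γ) * (1 - βb₀ ^ n) / (1 - βb₀)) - (βb₁ + γ) := by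
        field_simp
        ring
      rw [halg]
      linarith
  exact main t le_rfl
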